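/- arXiv:2102.05184 — 3 statements merged into one kernel-verified Lean document; each statement's English description precedes it below -/
import Mathlib

section
/- Let H be a separable Hilbert space, let (T_n) be a nondecreasing sequence of nonnegative self-adjoint trace-class operators on H with sup_n trace(T_n) < ∞. Then there exists a nonnegative self-adjoint trace-class operator T such that T_n → T weakly and trace(T_n) → trace(T). -/
set_option maxHeartbeats 1000000
set_option synthInstance.maxHeartbeats 1000000

open Filter Topology
open scoped ComplexInnerProductSpace

section Aux

variable {H ι : Type*} [NormedAddCommGroup H] [InnerProductSpace ℂ H] [CompleteSpace H]

lemma aux_re_inner_comm (A : H →L[ℂ] H) (x : H) : (⟪A x, x⟫).re = (⟪x, A x⟫).re :=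
  inner_re_symm (𝕜 := ℂ) _ _

lemma aux_normsq_eq {R S : H →L[ℂ] H} (hR : IsSelfAdjoint R) (hRR : R * R = S) (z : H) :
    ‖R z‖ ^ 2 = (⟪z, S z⟫).re := by
  have h1 : ⟪z, S z⟫ = ⟪R z, R z⟫ := by
    rw [← hRR, ContinuousLinearMap.mul_apply]
    calc ⟪z, R (R z)⟫ = ⟪ContinuousLinearMap.adjoint R z, R z⟫ :=
          (ContinuousLinearMap.adjoint_inner_left R (R z) z).symm
      _ = ⟪R z, R z⟫ := by rw [hR.adjoint_eq]
  rw [h1]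
  exact (inner_self_eq_norm_sq (𝕜 := ℂ) (R z)).symm

/-- Key lemma: for a positive operator whose diagonal sums to `t` in a Hilbert basis,
the quadratic form is bounded by `t * ‖z‖²`. -/
lemma aux_quad_le_trace (e : HilbertBasis ι ℂ H) {S : H →L[ℂ] H} (hS : S.IsPositive)
    {t : ℝ} (ht : HasSum (fun i => (⟪e i, S (e i)⟫).re) t) (z : H) :
    (⟪z, S z⟫).re ≤ t * ‖z‖ ^ 2 := by
  have hS0 : (0 : H →L[ℂ] H) ≤ S := (ContinuousLinearMap.nonneg_iff_isPositive S).mpr hS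
  set R := CFC.sqrt S with hRdef
  have hR0 : (0 : H →L[ℂ] H) ≤ R := CFC.sqrt_nonneg S
  have hRsa : IsSelfAdjoint R :=
    ((ContinuousLinearMap.nonneg_iff_isPositive R).mp hR0).isSelfAdjoint
  have hRR : R * R = S := CFC.sqrt_mul_sqrt_self S hS0
  -- Parseval for R z
  have hpar : HasSum (fun i => (⟪R z, e i⟫ * ⟪e i, R z⟫).re) (⟪R z, R z⟫).re := by
    exact (e.hasSum_inner_mul_inner (R z) (R z)).mapL Complex.reCLM
  have hnorm : (⟪R z, R z⟫).re = ‖R z‖ ^ 2 := inner_self_eq_norm_sq (𝕜 := ℂ) (R z)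
  have hterm : ∀ i, (⟪R z, e i⟫ * ⟪e i, R z⟫).re = ‖⟪e i, R z⟫‖ ^ 2 := by
    intro i
    rw [← inner_conj_symm (R z) (e i)]
    simp only [Complex.mul_re, Complex.conj_re, Complex.conj_im,
      Complex.sq_norm, Complex.normSq_apply]
    ring
  have hmaj : HasSum (fun i => (⟪e i, S (e i)⟫).re * ‖z‖ ^ 2) (t * ‖z‖ ^ 2) :=
    ht.mul_right _
  have hle : ∀ i, ‖⟪e i, R z⟫‖ ^ 2 ≤ (⟪e i, S (e i)⟫).re * ‖z‖ ^ 2 := by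
    intro i
    have h1 : ⟪e i, R z⟫ = ⟪R (e i), z⟫ := by
      calc ⟪e i, R z⟫ = ⟪ContinuousLinearMap.adjoint R (e i), z⟫ :=
            (ContinuousLinearMap.adjoint_inner_left R z (e i)).symm
        _ = ⟪R (e i), z⟫ := by rw [hRsa.adjoint_eq]
    have h2 : ‖⟪R (e i), z⟫‖ ≤ ‖R (e i)‖ * ‖z‖ := norm_inner_le_norm _ _
    have h3 : ‖R (e i)‖ ^ 2 = (⟪e i, S (e i)⟫).re := aux_normsq_eq hRsa hRR (e i)
    calc ‖⟪e i, R z⟫‖ ^ 2 = ‖⟪R (e i), z⟫‖ ^ 2 := by rw [h1]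
      _ ≤ (‖R (e i)‖ * ‖z‖) ^ 2 := by
          apply pow_le_pow_left₀ (norm_nonneg _) h2
      _ = ‖R (e i)‖ ^ 2 * ‖z‖ ^ 2 := by ring
      _ = (⟪e i, S (e i)⟫).re * ‖z‖ ^ 2 := by rw [h3]
  have key : ‖R z‖ ^ 2 ≤ t * ‖z‖ ^ 2 := by
    rw [← hnorm]
    refine hasSum_le ?_ hpar hmaj
    intro i
    rw [hterm i]
    exact hle i
  calc (⟪z, S z⟫).re = ‖R z‖ ^ 2 := (aux_normsq_eq hRsa hRR z).symm
    _ ≤ t * ‖z‖ ^ 2 := key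

/-- Key lemma: for a positive operator with quadratic form bounded by `C‖·‖²`,
`‖S y‖² ≤ C ⟪y, S y⟫`. -/
lemma aux_normsq_le {S : H →L[ℂ] H} (hS : S.IsPositive) {C : ℝ}
    (hC : ∀ z, (⟪z, S z⟫).re ≤ C * ‖z‖ ^ 2) (y : H) :
    ‖S y‖ ^ 2 ≤ C * (⟪y, S y⟫).re := by
  have hS0 : (0 : H →L[ℂ] H) ≤ S := (ContinuousLinearMap.nonneg_iff_isPositive S).mpr hS
  set R := CFC.sqrt S with hRdef
  have hR0 : (0 : H →L[ℂ] H) ≤ R := CFC.sqrt_nonneg S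
  have hRsa : IsSelfAdjoint R :=
    ((ContinuousLinearMap.nonneg_iff_isPositive R).mp hR0).isSelfAdjoint
  have hRR : R * R = S := CFC.sqrt_mul_sqrt_self S hS0
  have h1 : S y = R (R y) := by rw [← hRR]; rfl
  calc ‖S y‖ ^ 2 = ‖R (R y)‖ ^ 2 := by rw [h1]
    _ = (⟪R y, S (R y)⟫).re := aux_normsq_eq hRsa hRR (R y)
    _ ≤ C * ‖R y‖ ^ 2 := hC (R y)
    _ = C * (⟪y, S y⟫).re := by rw [aux_normsq_eq hRsa hRR y]

end Aux

/-- Noncommutative monotone convergence: a nondecreasing sequence of nonnegative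
self-adjoint trace-class operators with uniformly bounded traces converges weakly to a
nonnegative trace-class operator, and the traces converge.  The trace is expressed as the
sum of diagonal matrix elements in a Hilbert basis. -/
theorem stmt1 {H ι : Type*} [NormedAddCommGroup H] [InnerProductSpace ℂ H]
    [CompleteSpace H]
    (e : HilbertBasis ι ℂ H)
    (T : ℕ → H →L[ℂ] H) (tr : ℕ → ℝ)
    (hpos : ∀ n, (T n).IsPositive)
    (hmono : ∀ n x, (⟪x, T n x⟫).re ≤ (⟪x, T (n + 1) x⟫).re)
    (htr : ∀ n, HasSum (fun i => (⟪e i, T n (e i)⟫).re) (tr n))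
    (hbd : ∃ C : ℝ, ∀ n, tr n ≤ C) :
    ∃ (Tlim : H →L[ℂ] H) (trlim : ℝ),
      Tlim.IsPositive ∧
      HasSum (fun i => (⟪e i, Tlim (e i)⟫).re) trlim ∧
      (∀ x y : H, Tendsto (fun n => ⟪x, T n y⟫) atTop (𝓝 ⟪x, Tlim y⟫)) ∧
      Tendsto tr atTop (𝓝 trlim) := by
  obtain ⟨C₀, hC₀⟩ := hbd
  set C : ℝ := max C₀ 1 with hCdef
  have hC1 : (1 : ℝ) ≤ C := le_max_right _ _
  have hC0 : (0 : ℝ) < C := lt_of_lt_of_le one_pos hC1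
  have htrC : ∀ n, tr n ≤ C := fun n => (hC₀ n).trans (le_max_left _ _)
  -- quadratic form monotone in n
  have hchain : ∀ x, Monotone fun n => (⟪x, T n x⟫).re := fun x =>
    monotone_nat_of_le_succ fun n => hmono n x
  -- quadratic forms nonneg
  have hq0 : ∀ n x, 0 ≤ (⟪x, T n x⟫).re := fun n x => by
    have h := (hpos n).2 x
    rw [ContinuousLinearMap.reApplyInnerSelf_apply] at h
    exact le_of_le_of_eq h (aux_re_inner_comm (T n) x)
  -- quadratic form bound
  have hqC : ∀ n z, (⟪z, T n z⟫).re ≤ C * ‖z‖ ^ 2 := by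
    intro n z
    calc (⟪z, T n z⟫).re ≤ tr n * ‖z‖ ^ 2 := aux_quad_le_trace e (hpos n) (htr n) z
      _ ≤ C * ‖z‖ ^ 2 := by
        apply mul_le_mul_of_nonneg_right (htrC n) (sq_nonneg _)
  -- positivity of differences
  have hdiffpos : ∀ {n m : ℕ}, n ≤ m → (T m - T n).IsPositive := by
    intro n m hnm
    refine ContinuousLinearMap.isPositive_def'.mpr ⟨((hpos m).isSelfAdjoint).sub ((hpos n).isSelfAdjoint), fun x => ?_⟩
    rw [ContinuousLinearMap.reApplyInnerSelf_apply]
    show (0:ℝ) ≤ (⟪(T m - T n) x, x⟫).re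
    rw [aux_re_inner_comm]
    rw [ContinuousLinearMap.sub_apply, inner_sub_right, Complex.sub_re]
    have := hchain x hnm
    linarith
  -- norm-squared difference bound
  have hnormdiff : ∀ {n m : ℕ}, n ≤ m → ∀ y,
      ‖T m y - T n y‖ ^ 2 ≤ C * ((⟪y, T m y⟫).re - (⟪y, T n y⟫).re) := by
    intro n m hnm y
    have hqd : ∀ z, (⟪z, (T m - T n) z⟫).re ≤ C * ‖z‖ ^ 2 := by
      intro z
      rw [ContinuousLinearMap.sub_apply, inner_sub_right, Complex.sub_re]
      have h1 := hqC m z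
      have h2 := hq0 n z
      linarith
    have := aux_normsq_le (hdiffpos hnm) hqd y
    rw [ContinuousLinearMap.sub_apply, inner_sub_right, Complex.sub_re] at this
    simpa [ContinuousLinearMap.sub_apply] using this
  -- norm bound on T n y
  have hnormT : ∀ n y, ‖T n y‖ ≤ C * ‖y‖ := by
    intro n y
    have h1 : ‖T n y‖ ^ 2 ≤ C * (⟪y, T n y⟫).re := aux_normsq_le (hpos n) (hqC n) y
    have h2 : ‖T n y‖ ^ 2 ≤ C ^ 2 * ‖y‖ ^ 2 := by
      calc ‖T n y‖ ^ 2 ≤ C * (⟪y, T n y⟫).re := h1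
        _ ≤ C * (C * ‖y‖ ^ 2) := by
          exact mul_le_mul_of_nonneg_left (hqC n y) hC0.le
        _ = C ^ 2 * ‖y‖ ^ 2 := by ring
    have h3 : ‖T n y‖ ^ 2 ≤ (C * ‖y‖) ^ 2 := by nlinarith
    have h4 : 0 ≤ C * ‖y‖ := mul_nonneg hC0.le (norm_nonneg _)
    nlinarith [norm_nonneg (T n y)]
  -- the quadratic form limits exist (monotone bounded)
  have hacauchy : ∀ y, CauchySeq fun n => (⟪y, T n y⟫).re := by
    intro y
    have hbdd : BddAbove (Set.range fun n => (⟪y, T n y⟫).re) :=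
      ⟨C * ‖y‖ ^ 2, by rintro _ ⟨n, rfl⟩; exact hqC n y⟩
    exact (tendsto_atTop_ciSup (hchain y) hbdd).cauchySeq
  -- T n y is Cauchy
  have hTcauchy : ∀ y, CauchySeq fun n => T n y := by
    intro y
    rw [Metric.cauchySeq_iff]
    intro ε hε
    obtain ⟨N, hN⟩ := Metric.cauchySeq_iff.mp (hacauchy y) (ε ^ 2 / C)
      (div_pos (pow_pos hε 2) hC0)
    refine ⟨N, fun m hm n hn => ?_⟩
    -- wlog n ≤ m
    have key : ∀ {p q : ℕ}, p ≤ q → q ≥ N → p ≥ N → dist (T q y) (T p y) < ε := by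
      intro p q hpq hq hp
      have h1 := hN q hq p hp
      rw [Real.dist_eq] at h1
      have h2 : (⟪y, T q y⟫).re - (⟪y, T p y⟫).re ≤ |(⟪y, T q y⟫).re - (⟪y, T p y⟫).re| :=
        le_abs_self _
      have h3 : ‖T q y - T p y‖ ^ 2 < ε ^ 2 := by
        calc ‖T q y - T p y‖ ^ 2 ≤ C * ((⟪y, T q y⟫).re - (⟪y, T p y⟫).re) :=
              hnormdiff hpq y
          _ ≤ C * |(⟪y, T q y⟫).re - (⟪y, T p y⟫).re| :=
              mul_le_mul_of_nonneg_left h2 hC0.le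
          _ < C * (ε ^ 2 / C) := by
              exact mul_lt_mul_of_pos_left h1 hC0
          _ = ε ^ 2 := by field_simp
      rw [dist_eq_norm]
      nlinarith [norm_nonneg (T q y - T p y)]
    rcases le_total n m with h | h
    · exact key h hm hn
    · rw [dist_comm]; exact key h hn hm
  -- pointwise limits
  have hTlim : ∀ y, ∃ L, Tendsto (fun n => T n y) atTop (𝓝 L) := fun y =>
    cauchySeq_tendsto_of_complete (hTcauchy y)
  choose g hg using hTlim
  -- construct the limit operator
  have hgadd : ∀ x y, g (x + y) = g x + g y := by
    intro x y
    refine tendsto_nhds_unique ?_ ((hg x).add (hg y))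
    have : (fun n => T n (x + y)) = fun n => T n x + T n y := by
      ext n; rw [map_add]
    rw [← this]
    exact hg (x + y)
  have hgsmul : ∀ (c : ℂ) (x : H), g (c • x) = c • g x := by
    intro c x
    refine tendsto_nhds_unique ?_ ((hg x).const_smul c)
    have : (fun n => T n (c • x)) = fun n => c • T n x := by
      ext n; rw [map_smul]
    rw [← this]
    exact hg (c • x)
  have hgbound : ∀ y, ‖g y‖ ≤ C * ‖y‖ := by
    intro y
    exact le_of_tendsto ((hg y).norm) (Filter.Eventually.of_forall fun n => hnormT n y)
  set Tlin : H →ₗ[ℂ] H :=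
    { toFun := g
      map_add' := hgadd
      map_smul' := hgsmul } with hTlin
  set Tlim : H →L[ℂ] H := LinearMap.mkContinuous Tlin C (fun y => hgbound y) with hTlim
  have hTlimapp : ∀ y, Tlim y = g y := fun y => rfl
  -- weak convergence
  have hweak : ∀ x y : H, Tendsto (fun n => ⟪x, T n y⟫) atTop (𝓝 ⟪x, Tlim y⟫) := by
    intro x y
    rw [hTlimapp]
    exact (tendsto_const_nhds).inner (hg y)
  -- quadratic form convergence
  have hqconv : ∀ x y : H, Tendsto (fun n => (⟪x, T n y⟫).re) atTop (𝓝 (⟪x, Tlim y⟫).re) :=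
    fun x y => (Complex.continuous_re.continuousAt).tendsto.comp (hweak x y)
  -- self-adjointness
  have hsymm : ∀ n, ∀ x y : H, ⟪T n x, y⟫ = ⟪x, T n y⟫ := fun n =>
    (ContinuousLinearMap.isSelfAdjoint_iff_isSymmetric.mp (hpos n).isSelfAdjoint)
  have hTlimsa : IsSelfAdjoint Tlim := by
    rw [ContinuousLinearMap.isSelfAdjoint_iff_isSymmetric]
    intro x y
    have h1 : Tendsto (fun n => ⟪T n x, y⟫) atTop (𝓝 ⟪Tlim x, y⟫) := by
      rw [hTlimapp]
      exact (hg x).inner tendsto_const_nhds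
    have h2 : Tendsto (fun n => ⟪T n x, y⟫) atTop (𝓝 ⟪x, Tlim y⟫) := by
      have : (fun n => ⟪T n x, y⟫) = fun n => ⟪x, T n y⟫ := by
        ext n; exact hsymm n x y
      rw [this]
      exact hweak x y
    exact (tendsto_nhds_unique h1 h2 : (⟪Tlim x, y⟫ : ℂ) = ⟪x, Tlim y⟫)
  have hTlimpos : Tlim.IsPositive := by
    refine ContinuousLinearMap.isPositive_def'.mpr ⟨hTlimsa, fun x => ?_⟩
    rw [ContinuousLinearMap.reApplyInnerSelf_apply]
    show (0:ℝ) ≤ (⟪Tlim x, x⟫).re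
    rw [aux_re_inner_comm]
    exact ge_of_tendsto (hqconv x x) (Filter.Eventually.of_forall fun n => hq0 n x)
  -- trace convergence
  have htrmono : Monotone tr := by
    apply monotone_nat_of_le_succ
    intro n
    exact hasSum_le (fun i => hmono n (e i)) (htr n) (htr (n + 1))
  have htrbdd : BddAbove (Set.range tr) := ⟨C, by rintro _ ⟨n, rfl⟩; exact htrC n⟩
  set trlim : ℝ := ⨆ n, tr n with htrlimdef
  have htrconv : Tendsto tr atTop (𝓝 trlim) := tendsto_atTop_ciSup htrmono htrbdd
  -- diagonal terms
  set b : ι → ℝ := fun i => (⟪e i, Tlim (e i)⟫).re with hbdef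
  have hbn : ∀ i, Tendsto (fun n => (⟪e i, T n (e i)⟫).re) atTop (𝓝 (b i)) :=
    fun i => hqconv (e i) (e i)
  have hb0 : ∀ i, 0 ≤ b i := fun i =>
    ge_of_tendsto (hbn i) (Filter.Eventually.of_forall fun n => hq0 n (e i))
  have hble : ∀ n i, (⟪e i, T n (e i)⟫).re ≤ b i := by
    intro n i
    refine ge_of_tendsto (hbn i) ?_
    filter_upwards [eventually_ge_atTop n] with m hm
    exact hchain (e i) hm
  -- partial sums of b are bounded by trlim
  have hub : ∀ s : Finset ι, ∑ i ∈ s, b i ≤ trlim := by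
    intro s
    have h1 : Tendsto (fun n => ∑ i ∈ s, (⟪e i, T n (e i)⟫).re) atTop
        (𝓝 (∑ i ∈ s, b i)) := tendsto_finset_sum s fun i _ => hbn i
    refine le_of_tendsto h1 (Filter.Eventually.of_forall fun n => ?_)
    calc ∑ i ∈ s, (⟪e i, T n (e i)⟫).re ≤ tr n :=
          sum_le_hasSum s (fun i _ => hq0 n (e i)) (htr n)
      _ ≤ trlim := le_ciSup htrbdd n
  have hlub : IsLUB (Set.range fun s : Finset ι => ∑ i ∈ s, b i) trlim := by
    constructor
    · rintro _ ⟨s, rfl⟩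
      exact hub s
    · intro w hw
      have hw' : ∀ s : Finset ι, ∑ i ∈ s, b i ≤ w := fun s => hw ⟨s, rfl⟩
      refine ciSup_le fun n => ?_
      refine hasSum_le_of_sum_le (htr n) fun s => ?_
      calc ∑ i ∈ s, (⟪e i, T n (e i)⟫).re ≤ ∑ i ∈ s, b i :=
            Finset.sum_le_sum fun i _ => hble n i
        _ ≤ w := hw' s
  have hbsum : HasSum b trlim := hasSum_of_isLUB_of_nonneg trlim hb0 hlub
  exact ⟨Tlim, trlim, hTlimpos, hbsum, hweak, htrconv⟩
end

section
/- Let H₁, H₂ be separable Hilbert spaces, A = A* ≥ 0 a self-adjoint (possibly unbounded) operator on H₁ with spectral measure E, and S a nonnegative self-adjoint trace-class operator on H₁ with eigenbasis (e_j), eigenvalues (σ_j), satisfying Σ_j σ_j ∫₀^∞ λ ⟨e_j, E(dλ) e_j⟩ < ∞. If T is a nonnegative trace-class operator on H₁ ⊗ H₂ with partial trace over H₂ equal to S, then T^{1/2}(A ⊗ I)T^{1/2} is trace-class and trace(T^{1/2}(A ⊗ I)T^{1/2}) = trace(S^{1/2} A S^{1/2}). -/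
open MeasureTheory
open scoped ComplexInnerProductSpace

section myaux
variable {H : Type*} [NormedAddCommGroup H] [InnerProductSpace ℂ H]

private lemma my_parseval {ι : Type*} (b : HilbertBasis ι ℂ H) (v : H) :
    HasSum (fun i => ‖⟪b i, v⟫‖ ^ 2) (‖v‖ ^ 2) := by
  have h := (b.hasSum_inner_mul_inner v v).mapL Complex.reCLM
  convert h using 2 with i
  · rw [Complex.reCLM_apply, ← inner_conj_symm v (b i), ← Complex.normSq_eq_conj_mul_self,
      Complex.ofReal_re, Complex.normSq_eq_norm_sq]
  · rw [Complex.reCLM_apply, ← inner_self_eq_norm_sq (𝕜 := ℂ), RCLike.re_to_complex]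

private lemma my_quad {ι : Type*} (b : HilbertBasis ι ℂ H) (T : H →L[ℂ] H) (τ : ι → ℝ)
    (hTf : ∀ k, T (b k) = (τ k : ℂ) • b k) (v : H) :
    HasSum (fun k => τ k * ‖⟪b k, v⟫‖ ^ 2) ((⟪v, T v⟫).re) := by
  have h := (((b.hasSum_repr v).mapL T).mapL (innerSL ℂ v)).mapL Complex.reCLM
  convert h using 2 with k
  have hbk : T (b.repr v k • b k) = b.repr v k • ((τ k : ℂ) • b k) := by
    rw [ContinuousLinearMap.map_smul]
    exact congrArg _ (hTf k)
  rw [Complex.reCLM_apply, innerSL_apply_apply, hbk, b.repr_apply_apply, inner_smul_right,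
    inner_smul_right, ← inner_conj_symm v (b k)]
  have hz : ⟪b k, v⟫ * ((τ k : ℂ) * (starRingEnd ℂ) ⟪b k, v⟫)
      = (τ k : ℂ) * ((starRingEnd ℂ) ⟪b k, v⟫ * ⟪b k, v⟫) := by ring
  rw [hz, ← Complex.normSq_eq_conj_mul_self, ← Complex.ofReal_mul, Complex.ofReal_re]
  simp [Complex.normSq_eq_norm_sq]
  rw [Complex.reCLM_apply, innerSL_apply_apply]

end myaux

section myaux2
variable {H₁ H₂ K ι₁ ι₂ : Type*}
  [NormedAddCommGroup H₁] [InnerProductSpace ℂ H₁] [CompleteSpace H₁]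
  [NormedAddCommGroup H₂] [InnerProductSpace ℂ H₂] [CompleteSpace H₂]
  [NormedAddCommGroup K] [InnerProductSpace ℂ K] [CompleteSpace K]

set_option linter.unusedSectionVars false in
private lemma my_orth (e : HilbertBasis ι₁ ℂ H₁) (g : HilbertBasis ι₂ ℂ H₂)
    (tmul : H₁ → H₂ → K)
    (htinner : ∀ (a c : H₁) (b d : H₂), ⟪tmul a b, tmul c d⟫ = ⟪a, c⟫ * ⟪b, d⟫) :
    Orthonormal ℂ (fun p : ι₁ × ι₂ => tmul (e p.1) (g p.2)) := by
  classical
  rw [orthonormal_iff_ite]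
  intro p q
  rw [htinner, orthonormal_iff_ite.mp e.orthonormal p.1 q.1,
    orthonormal_iff_ite.mp g.orthonormal p.2 q.2]
  by_cases h1 : p.1 = q.1 <;> by_cases h2 : p.2 = q.2 <;>
    simp [h1, h2, Prod.ext_iff]

set_option maxHeartbeats 1000000 in
private lemma my_tmul_hasSum (e : HilbertBasis ι₁ ℂ H₁) (g : HilbertBasis ι₂ ℂ H₂)
    (tmul : H₁ → H₂ → K)
    (htinner : ∀ (a c : H₁) (b d : H₂), ⟪tmul a b, tmul c d⟫ = ⟪a, c⟫ * ⟪b, d⟫)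
    (a : H₁) (b : H₂) :
    HasSum (fun p : ι₁ × ι₂ => (⟪e p.1, a⟫ * ⟪g p.2, b⟫) • tmul (e p.1) (g p.2))
      (tmul a b) := by
  classical
  set u : ι₁ × ι₂ → K := fun p => tmul (e p.1) (g p.2) with hu
  set c : ι₁ × ι₂ → ℂ := fun p => ⟪e p.1, a⟫ * ⟪g p.2, b⟫ with hc
  have horth : Orthonormal ℂ u := my_orth e g tmul htinner
  have hcs : ∀ p : ι₁ × ι₂, ‖c p‖ ^ 2 = ‖⟪e p.1, a⟫‖ ^ 2 * ‖⟪g p.2, b⟫‖ ^ 2 := by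
    intro p; rw [hc]; simp [norm_mul, mul_pow]
  have hsum : Summable (fun p : ι₁ × ι₂ => ‖⟪e p.1, a⟫‖ ^ 2 * ‖⟪g p.2, b⟫‖ ^ 2) :=
    (my_parseval e a).summable.mul_of_nonneg (my_parseval g b).summable
      (fun _ => sq_nonneg _) (fun _ => sq_nonneg _)
  have hsq : HasSum (fun p : ι₁ × ι₂ => ‖c p‖ ^ 2) (‖a‖ ^ 2 * ‖b‖ ^ 2) := by
    have := (my_parseval e a).mul_eq (my_parseval g b) hsum.hasSum
    rw [this]
    simpa only [hcs] using hsum.hasSum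
  have hinn : ∀ p : ι₁ × ι₂, ⟪u p, tmul a b⟫ = c p := fun p => htinner _ _ _ _
  have key : ∀ F : Finset (ι₁ × ι₂),
      ‖tmul a b - ∑ p ∈ F, c p • u p‖ ^ 2 = ‖a‖ ^ 2 * ‖b‖ ^ 2 - ∑ p ∈ F, ‖c p‖ ^ 2 := by
    intro F
    rw [norm_sub_sq (𝕜 := ℂ)]
    have h1 : ⟪tmul a b, ∑ p ∈ F, c p • u p⟫ = ((∑ p ∈ F, ‖c p‖ ^ 2 : ℝ) : ℂ) := by
      rw [inner_sum]
      rw [Complex.ofReal_sum]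
      refine Finset.sum_congr rfl fun p _ => ?_
      rw [inner_smul_right, ← inner_conj_symm (tmul a b) (u p), hinn p, Complex.mul_conj,
        Complex.normSq_eq_norm_sq]
    have h2 : ‖∑ p ∈ F, c p • u p‖ ^ 2 = ∑ p ∈ F, ‖c p‖ ^ 2 := by
      rw [← inner_self_eq_norm_sq (𝕜 := ℂ), horth.inner_sum c c F, RCLike.re_to_complex]
      rw [show (∑ p ∈ F, (starRingEnd ℂ) (c p) * c p)
          = ((∑ p ∈ F, ‖c p‖ ^ 2 : ℝ) : ℂ) by
        rw [Complex.ofReal_sum]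
        refine Finset.sum_congr rfl fun p _ => ?_
        rw [← Complex.normSq_eq_conj_mul_self, Complex.normSq_eq_norm_sq]]
      exact Complex.ofReal_re _
    have htn : ‖tmul a b‖ ^ 2 = ‖a‖ ^ 2 * ‖b‖ ^ 2 := by
      rw [← inner_self_eq_norm_sq (𝕜 := ℂ), RCLike.re_to_complex, htinner,
        inner_self_eq_norm_sq_to_K (𝕜 := ℂ), inner_self_eq_norm_sq_to_K (𝕜 := ℂ)]
      norm_cast
    rw [h1, h2, htn, RCLike.re_to_complex, Complex.ofReal_re]
    ring
  have htend : Filter.Tendsto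
      (fun F : Finset (ι₁ × ι₂) => ‖tmul a b - ∑ p ∈ F, c p • u p‖ ^ 2)
      Filter.atTop (nhds 0) := by
    have h0 : Filter.Tendsto
        (fun F : Finset (ι₁ × ι₂) => ‖a‖ ^ 2 * ‖b‖ ^ 2 - ∑ p ∈ F, ‖c p‖ ^ 2)
        Filter.atTop (nhds (‖a‖ ^ 2 * ‖b‖ ^ 2 - ‖a‖ ^ 2 * ‖b‖ ^ 2)) :=
      tendsto_const_nhds.sub hsq
    rw [sub_self] at h0
    simpa only [key] using h0
  have htn : Filter.Tendsto (fun F : Finset (ι₁ × ι₂) => ‖tmul a b - ∑ p ∈ F, c p • u p‖)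
      Filter.atTop (nhds 0) := by
    have hcomp : (fun F : Finset (ι₁ × ι₂) => ‖tmul a b - ∑ p ∈ F, c p • u p‖)
        = (fun x => Real.sqrt x) ∘ (fun F => ‖tmul a b - ∑ p ∈ F, c p • u p‖ ^ 2) := by
      funext F
      simp [Function.comp, Real.sqrt_sq (norm_nonneg _)]
    rw [hcomp]
    have := (Real.continuous_sqrt.tendsto 0).comp htend
    simpa [Real.sqrt_zero] using this
  rw [HasSum, SummationFilter.unconditional_filter]
  rw [tendsto_iff_norm_sub_tendsto_zero]
  simpa only [norm_sub_rev] using htn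

end myaux2

/-- Energy and partial trace: if `A = A* ≥ 0` is self-adjoint on `H₁` with spectral
measure `E`, `S ≥ 0` is trace class on `H₁` with eigenbasis `(e_j)`, eigenvalues `(σ_j)`,
satisfying the finite-energy condition `Σ_j σ_j ∫ λ ⟨e_j, E(dλ) e_j⟩ < ∞`, and `T ≥ 0` is
trace class on `H₁ ⊗ H₂` with partial trace over `H₂` equal to `S`, then
`T^{1/2}(A ⊗ I)T^{1/2}` is trace class with
`trace(T^{1/2}(A ⊗ I)T^{1/2}) = trace(S^{1/2} A S^{1/2})`.

Encodings: the tensor product `H₁ ⊗ H₂` is a Hilbert space `K` with structure map `tmul`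
and operator map `op` (`op A B = A ⊗ B`); the unbounded operator `A` is encoded by its
projection-valued measure `E`, whose scalar spectral measures are `μ x = ⟨x, E(·) x⟩` on
`H₁` and `ν v = ⟨v, (E(·) ⊗ I) v⟩` on `K`; the traces of `S^{1/2} A S^{1/2}` and
`T^{1/2}(A ⊗ I)T^{1/2}` are the spectral integrals `Σ_j σ_j ∫ λ dμ_{e_j}` and
`Σ_k τ_k ∫ λ dν_{f_k}`, where `(f_k, τ_k)` is the eigendecomposition of `T`;
the partial-trace condition is expressed via matrix elements in a Hilbert basis `g`
of `H₂`. -/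
theorem stmt14 {H₁ H₂ K ι₁ ι₂ κ : Type*}
    [NormedAddCommGroup H₁] [InnerProductSpace ℂ H₁] [CompleteSpace H₁]
    [NormedAddCommGroup H₂] [InnerProductSpace ℂ H₂] [CompleteSpace H₂]
    [NormedAddCommGroup K] [InnerProductSpace ℂ K] [CompleteSpace K]
    (e : HilbertBasis ι₁ ℂ H₁) (g : HilbertBasis ι₂ ℂ H₂) (f : HilbertBasis κ ℂ K)
    (tmul : H₁ → H₂ → K)
    (htinner : ∀ (a c : H₁) (b d : H₂), ⟪tmul a b, tmul c d⟫ = ⟪a, c⟫ * ⟪b, d⟫)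
    (hdense : Dense ((Submodule.span ℂ {v : K | ∃ a b, v = tmul a b} : Submodule ℂ K) : Set K))
    (op : (H₁ →L[ℂ] H₁) → (H₂ →L[ℂ] H₂) → (K →L[ℂ] K))
    (hop : ∀ (A : H₁ →L[ℂ] H₁) (B : H₂ →L[ℂ] H₂) (x : H₁) (y : H₂),
      op A B (tmul x y) = tmul (A x) (B y))
    -- the spectral measure `E` of `A`, supported on `[0, ∞)`
    (E : Set ℝ → (H₁ →L[ℂ] H₁))
    (hproj : ∀ ω, MeasurableSet ω → IsSelfAdjoint (E ω) ∧ (E ω) ∘L (E ω) = E ω)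
    (μ : H₁ → Measure ℝ)
    (hμ : ∀ (x : H₁) (ω : Set ℝ), MeasurableSet ω →
      μ x ω = ENNReal.ofReal ((⟪x, E ω x⟫).re))
    (hμsupp : ∀ x, μ x (Set.Iio 0) = 0)
    (ν : K → Measure ℝ)
    (hν : ∀ (v : K) (ω : Set ℝ), MeasurableSet ω →
      ν v ω = ENNReal.ofReal ((⟪v, op (E ω) 1 v⟫).re))
    -- `S`: nonnegative trace-class operator on `H₁`, eigenbasis `e`, eigenvalues `σ`
    (S : H₁ →L[ℂ] H₁) (hS : S.IsPositive)
    (σ : ι₁ → ℝ) (hσ : ∀ j, 0 ≤ σ j) (hSe : ∀ j, S (e j) = (σ j : ℂ) • e j)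
    (hStr : Summable σ)
    -- finite energy
    (henergy : (∑' j, ENNReal.ofReal (σ j) * ∫⁻ l, ENNReal.ofReal l ∂(μ (e j))) < ⊤)
    -- `T`: nonnegative trace-class operator on `K`, eigenbasis `f`, eigenvalues `τ`
    (T : K →L[ℂ] K) (hT : T.IsPositive)
    (τ : κ → ℝ) (hτ : ∀ k, 0 ≤ τ k) (hTf : ∀ k, T (f k) = (τ k : ℂ) • f k)
    (hTtr : Summable τ)
    -- partial trace of `T` over `H₂` equals `S`
    (hpt : ∀ x y : H₁,
      HasSum (fun i => ⟪tmul x (g i), T (tmul y (g i))⟫) ⟪x, S y⟫) :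
    (∑' k, ENNReal.ofReal (τ k) * ∫⁻ l, ENNReal.ofReal l ∂(ν (f k))) < ⊤ ∧
      (∑' k, ENNReal.ofReal (τ k) * ∫⁻ l, ENNReal.ofReal l ∂(ν (f k))) =
        ∑' j, ENNReal.ofReal (σ j) * ∫⁻ l, ENNReal.ofReal l ∂(μ (e j)) := by
  classical
  -- the product Hilbert basis of `K`
  have horth := my_orth e g tmul htinner
  have hspan : ⊤ ≤ (Submodule.span ℂ
      (Set.range (fun p : ι₁ × ι₂ => tmul (e p.1) (g p.2)))).topologicalClosure := by
    have h1 : Submodule.span ℂ {v : K | ∃ a b, v = tmul a b}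
        ≤ (Submodule.span ℂ
          (Set.range (fun p : ι₁ × ι₂ => tmul (e p.1) (g p.2)))).topologicalClosure := by
      rw [Submodule.span_le]
      rintro v ⟨a, b, rfl⟩
      have hs := my_tmul_hasSum e g tmul htinner a b
      have hmem : tmul a b ∈ closure ((Submodule.span ℂ
          (Set.range (fun p : ι₁ × ι₂ => tmul (e p.1) (g p.2)))) : Set K) := by
        refine mem_closure_of_tendsto hs (Filter.Eventually.of_forall fun F => ?_)
        simp only [SetLike.mem_coe]
        refine Submodule.sum_mem _ fun p _ => Submodule.smul_mem _ _ ?_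
        exact Submodule.subset_span ⟨p, rfl⟩
      exact hmem
    intro x _
    exact Submodule.topologicalClosure_minimal _ h1
      (Submodule.isClosed_topologicalClosure _) (hdense x)
  let u : HilbertBasis (ι₁ × ι₂) ℂ K := HilbertBasis.mk horth hspan
  have hu : ∀ p : ι₁ × ι₂, u p = tmul (e p.1) (g p.2) := fun p =>
    congrFun (HilbertBasis.coe_mk horth hspan) p
  have hupar : ∀ w : K,
      HasSum (fun p : ι₁ × ι₂ => ‖⟪tmul (e p.1) (g p.2), w⟫‖ ^ 2) (‖w‖ ^ 2) := by
    intro w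
    have := my_parseval u w
    simpa only [hu] using this
  -- the key measure identity
  have key : ∀ ω : Set ℝ, MeasurableSet ω →
      ∑' (k : κ), ENNReal.ofReal (τ k) * ν (f k) ω
        = ∑' (j : ι₁), ENNReal.ofReal (σ j) * μ (e j) ω := by
    intro ω hω
    have hQsa : ∀ (x y : H₁), ⟪E ω x, y⟫ = ⟪x, E ω y⟫ := by
      intro x y
      conv_lhs => rw [← (hproj ω hω).1.adjoint_eq]
      exact ContinuousLinearMap.adjoint_inner_left _ _ _
    have hQQ : ∀ x : H₁, E ω (E ω x) = E ω x := by
      intro x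
      rw [← ContinuousLinearMap.comp_apply, (hproj ω hω).2]
    have hPapp : ∀ (a : H₁) (b : H₂), op (E ω) 1 (tmul a b) = tmul (E ω a) b := by
      intro a b
      rw [hop]
      simp
    have hPsa : ∀ v w : K, ⟪op (E ω) 1 v, w⟫ = ⟪v, op (E ω) 1 w⟫ := by
      have hadj : ContinuousLinearMap.adjoint (op (E ω) 1) = op (E ω) 1 := by
        refine ContinuousLinearMap.ext_on hdense ?_
        rintro v ⟨a, b, rfl⟩
        refine ext_inner_right ℂ fun w => ?_
        rw [ContinuousLinearMap.adjoint_inner_left]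
        have h2 : (innerSL ℂ (tmul a b)).comp (op (E ω) 1)
            = innerSL ℂ (op (E ω) 1 (tmul a b)) := by
          refine ContinuousLinearMap.ext_on hdense ?_
          rintro w ⟨cc, d, rfl⟩
          simp only [ContinuousLinearMap.comp_apply, innerSL_apply_apply]
          rw [hPapp, hPapp, htinner, htinner, hQsa]
        have h3 := congrArg (fun L : K →L[ℂ] ℂ => L w) h2
        simpa using h3
      intro v w
      conv_lhs => rw [← hadj]
      exact ContinuousLinearMap.adjoint_inner_left _ _ _
    have hPP : ∀ v : K, op (E ω) 1 (op (E ω) 1 v) = op (E ω) 1 v := by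
      have hcomp : (op (E ω) 1).comp (op (E ω) 1) = op (E ω) 1 := by
        refine ContinuousLinearMap.ext_on hdense ?_
        rintro v ⟨a, b, rfl⟩
        simp only [ContinuousLinearMap.comp_apply]
        rw [hPapp, hPapp, hQQ]
      intro v
      have := DFunLike.congr_fun hcomp v
      simpa using this
    have hPnorm : ∀ v : K, (⟪v, op (E ω) 1 v⟫).re = ‖op (E ω) 1 v‖ ^ 2 := by
      intro v
      rw [← hPP v, ← hPsa v (op (E ω) 1 v), hPP v]
      exact inner_self_eq_norm_sq (𝕜 := ℂ) _
    have hQnorm : ∀ x : H₁, (⟪x, E ω x⟫).re = ‖E ω x‖ ^ 2 := by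
      intro x
      rw [← hQQ x, ← hQsa x (E ω x), hQQ x]
      exact inner_self_eq_norm_sq (𝕜 := ℂ) _
    -- quadratic form identities in ℝ≥0∞
    have quadT : ∀ v : K, ∑' (k : κ), ENNReal.ofReal (τ k * ‖⟪f k, v⟫‖ ^ 2)
        = ENNReal.ofReal ((⟪v, T v⟫).re) := by
      intro v
      have hq := my_quad f T τ hTf v
      rw [← ENNReal.ofReal_tsum_of_nonneg (fun k => mul_nonneg (hτ k) (sq_nonneg _))
        hq.summable, hq.tsum_eq]
    have quadS : ∀ x : H₁, ∑' (j : ι₁), ENNReal.ofReal (σ j * ‖⟪e j, x⟫‖ ^ 2)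
        = ENNReal.ofReal ((⟪x, S x⟫).re) := by
      intro x
      have hq := my_quad e S σ hSe x
      rw [← ENNReal.ofReal_tsum_of_nonneg (fun j => mul_nonneg (hσ j) (sq_nonneg _))
        hq.summable, hq.tsum_eq]
    have hptE : ∀ x : H₁,
        ∑' (i : ι₂), ENNReal.ofReal ((⟪tmul x (g i), T (tmul x (g i))⟫).re)
          = ENNReal.ofReal ((⟪x, S x⟫).re) := by
      intro x
      have hp : HasSum (fun i : ι₂ => (⟪tmul x (g i), T (tmul x (g i))⟫).re)
          ((⟪x, S x⟫).re) := (hpt x x).mapL Complex.reCLM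
      have hnn : ∀ i : ι₂, 0 ≤ (⟪tmul x (g i), T (tmul x (g i))⟫).re := fun i =>
        (Complex.nonneg_iff.mp (hT.inner_nonneg_right _)).1
      rw [← ENNReal.ofReal_tsum_of_nonneg hnn hp.summable, hp.tsum_eq]
    calc
      ∑' (k : κ), ENNReal.ofReal (τ k) * ν (f k) ω
          = ∑' (k : κ), ENNReal.ofReal (τ k * ‖op (E ω) 1 (f k)‖ ^ 2) := by
            refine tsum_congr fun k => ?_
            rw [hν (f k) ω hω, hPnorm (f k), ENNReal.ofReal_mul (hτ k)]
      _ = ∑' (k : κ) (p : ι₁ × ι₂),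
            ENNReal.ofReal (τ k * ‖⟪tmul (e p.1) (g p.2), op (E ω) 1 (f k)⟫‖ ^ 2) := by
            refine tsum_congr fun k => ?_
            have hps := (hupar (op (E ω) 1 (f k))).mul_left (τ k)
            rw [← hps.tsum_eq, ENNReal.ofReal_tsum_of_nonneg
              (fun p => mul_nonneg (hτ k) (sq_nonneg _)) hps.summable]
      _ = ∑' (p : ι₁ × ι₂) (k : κ),
            ENNReal.ofReal (τ k * ‖⟪f k, op (E ω) 1 (tmul (e p.1) (g p.2))⟫‖ ^ 2) := by
            rw [ENNReal.tsum_comm]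
            refine tsum_congr fun p => tsum_congr fun k => ?_
            rw [← hPsa (tmul (e p.1) (g p.2)) (f k), ← norm_inner_symm]
      _ = ∑' (p : ι₁ × ι₂),
            ENNReal.ofReal ((⟪op (E ω) 1 (tmul (e p.1) (g p.2)),
              T (op (E ω) 1 (tmul (e p.1) (g p.2)))⟫).re) := by
            exact tsum_congr fun p => quadT _
      _ = ∑' (p : ι₁ × ι₂), (fun (j : ι₁) (i : ι₂) =>
            ENNReal.ofReal ((⟪tmul (E ω (e j)) (g i), T (tmul (E ω (e j)) (g i))⟫).re)) p.1 p.2 := by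
            exact tsum_congr fun p => by rw [hPapp]
      _ = ∑' (j : ι₁) (i : ι₂),
            ENNReal.ofReal ((⟪tmul (E ω (e j)) (g i), T (tmul (E ω (e j)) (g i))⟫).re) :=
            ENNReal.tsum_prod (f := fun (j : ι₁) (i : ι₂) =>
              ENNReal.ofReal ((⟪tmul (E ω (e j)) (g i), T (tmul (E ω (e j)) (g i))⟫).re))
      _ = ∑' (j : ι₁), ENNReal.ofReal ((⟪E ω (e j), S (E ω (e j))⟫).re) := by
            exact tsum_congr fun j => hptE _
      _ = ∑' (j : ι₁) (j' : ι₁),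
            ENNReal.ofReal (σ j' * ‖⟪e j', E ω (e j)⟫‖ ^ 2) := by
            exact tsum_congr fun j => (quadS _).symm
      _ = ∑' (j' : ι₁) (j : ι₁),
            ENNReal.ofReal (σ j' * ‖⟪e j, E ω (e j')⟫‖ ^ 2) := by
            rw [ENNReal.tsum_comm]
            refine tsum_congr fun j' => tsum_congr fun j => ?_
            rw [← hQsa (e j') (e j), ← norm_inner_symm]
      _ = ∑' (j' : ι₁), ENNReal.ofReal (σ j' * ‖E ω (e j')‖ ^ 2) := by
            refine tsum_congr fun j' => ?_
            have hps := (my_parseval e (E ω (e j'))).mul_left (σ j')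
            rw [← hps.tsum_eq, ENNReal.ofReal_tsum_of_nonneg
              (fun j => mul_nonneg (hσ j') (sq_nonneg _)) hps.summable]
      _ = ∑' (j : ι₁), ENNReal.ofReal (σ j) * μ (e j) ω := by
            refine tsum_congr fun j => ?_
            rw [hμ (e j) ω hω, hQnorm (e j), ENNReal.ofReal_mul (hσ j)]
  -- assemble
  have hμν : (Measure.sum fun k => ENNReal.ofReal (τ k) • ν (f k))
      = Measure.sum fun j => ENNReal.ofReal (σ j) • μ (e j) := by
    ext ω hω
    rw [Measure.sum_apply _ hω, Measure.sum_apply _ hω]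
    simpa [Measure.smul_apply, smul_eq_mul] using key ω hω
  have h1 : ∑' k, ENNReal.ofReal (τ k) * ∫⁻ l, ENNReal.ofReal l ∂(ν (f k))
      = ∫⁻ l, ENNReal.ofReal l ∂(Measure.sum fun k => ENNReal.ofReal (τ k) • ν (f k)) := by
    rw [lintegral_sum_measure]
    exact tsum_congr fun k => by rw [lintegral_smul_measure, smul_eq_mul]
  have h2 : ∑' j, ENNReal.ofReal (σ j) * ∫⁻ l, ENNReal.ofReal l ∂(μ (e j))
      = ∫⁻ l, ENNReal.ofReal l ∂(Measure.sum fun j => ENNReal.ofReal (σ j) • μ (e j)) := by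
    rw [lintegral_sum_measure]
    exact tsum_congr fun j => by rw [lintegral_smul_measure, smul_eq_mul]
  have heq : ∑' k, ENNReal.ofReal (τ k) * ∫⁻ l, ENNReal.ofReal l ∂(ν (f k))
      = ∑' j, ENNReal.ofReal (σ j) * ∫⁻ l, ENNReal.ofReal l ∂(μ (e j)) := by
    rw [h1, hμν, ← h2]
  exact ⟨heq ▸ henergy, heq⟩
end

section
/- Let A = A* ≥ 0 be self-adjoint on a separable Hilbert space H with spectral measure E, define Φ_n(r) = r/(1 + r/n) and A_n = Φ_n(A). Let T be a nonnegative trace-class operator with finite energy Σ_j τ_j ∫₀^∞ λ ⟨e_j, E(dλ) e_j⟩ < ∞ (where T e_j = τ_j e_j). Then trace(T A_n) → trace(T^{1/2} A T^{1/2}) as n → ∞, and T^{1/2} A_n T^{1/2} → T^{1/2} A T^{1/2} in trace norm. -/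
open MeasureTheory Filter Topology
open scoped ComplexInnerProductSpace

namespace Stmt15Aux

noncomputable def Phi (n : ℕ) (l : ℝ) : ℝ := l / (1 + l / (n : ℝ))

lemma phi_meas (n : ℕ) : Measurable fun l : ℝ => ENNReal.ofReal (Phi n l) :=
  ENNReal.measurable_ofReal.comp
    (measurable_id.div (measurable_const.add (measurable_id.div_const _)))

lemma phi_nonneg {l : ℝ} (hl : 0 ≤ l) (n : ℕ) : 0 ≤ Phi n l :=
  div_nonneg hl (by positivity)

lemma phi_le_self {l : ℝ} (hl : 0 ≤ l) (n : ℕ) : Phi n l ≤ l :=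
  div_le_self hl (le_add_of_nonneg_right (by positivity))

lemma phi_mono {l : ℝ} (hl : 0 ≤ l) : Monotone fun n : ℕ => Phi (n + 1) l := by
  intro m n hmn
  unfold Phi
  apply div_le_div_of_nonneg_left hl
  · positivity
  · have hmn' : ((m:ℝ) + 1) ≤ (n:ℝ) + 1 := by
      have := (Nat.cast_le (α := ℝ)).mpr hmn; linarith
    have h1 : (0:ℝ) < (m:ℝ) + 1 := by positivity
    push_cast
    gcongr

lemma phi_real_mono {l : ℝ} (hl : 0 ≤ l) {s r : ℝ} (hs : 0 < s) (hsr : s ≤ r) :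
    l / (1 + l / s) ≤ l / (1 + l / r) := by
  have hr : 0 < r := hs.trans_le hsr
  apply div_le_div_of_nonneg_left hl
  · positivity
  · have : l / r ≤ l / s := div_le_div_of_nonneg_left hl hs hsr
    linarith

lemma phi_tendsto (l : ℝ) : Tendsto (fun n : ℕ => Phi (n + 1) l) atTop (𝓝 l) := by
  have h1 : Tendsto (fun n : ℕ => l / ((n:ℝ) + 1)) atTop (𝓝 0) := by
    apply Tendsto.div_atTop tendsto_const_nhds
    exact tendsto_atTop_add_const_right _ 1 tendsto_natCast_atTop_atTop
  have h2 : Tendsto (fun n : ℕ => 1 + l / ((n:ℝ) + 1)) atTop (𝓝 1) := by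
    simpa using tendsto_const_nhds.add h1
  have := (tendsto_const_nhds (x := l)).div h2 one_ne_zero
  simpa [Phi, Pi.div_def] using this

end Stmt15Aux

open Stmt15Aux

/-- Monotone regularization of the energy: with `A = A* ≥ 0` self-adjoint (spectral
measure `E`, scalar spectral measures `μ x = ⟨x, E(·)x⟩` supported on `[0,∞)`),
`Φ_n(r) = r/(1 + r/n)`, `A_n = Φ_n(A)`, and `T ≥ 0` trace class with eigenbasis `(e_j)`,
eigenvalues `(τ_j)` and finite energy `Σ_j τ_j ∫ λ dμ_{e_j} < ∞`, one has
`trace(T A_n) → trace(T^{1/2} A T^{1/2}) = Σ_j τ_j ∫ λ dμ_{e_j}` and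
`T^{1/2} A_n T^{1/2} → T^{1/2} A T^{1/2}` in trace norm, i.e.
`trace(T^{1/2}(A − A_n)T^{1/2}) = Σ_j τ_j ∫ (λ − Φ_n(λ)) dμ_{e_j} → 0`. -/
theorem stmt15 {H ι : Type*} [NormedAddCommGroup H] [InnerProductSpace ℂ H]
    [CompleteSpace H]
    (e : HilbertBasis ι ℂ H)
    (E : Set ℝ → (H →L[ℂ] H))
    (hproj : ∀ ω, MeasurableSet ω → IsSelfAdjoint (E ω) ∧ (E ω) ∘L (E ω) = E ω)
    (μ : H → Measure ℝ)
    (hμ : ∀ (x : H) (ω : Set ℝ), MeasurableSet ω →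
      μ x ω = ENNReal.ofReal ((⟪x, E ω x⟫).re))
    (hμsupp : ∀ x, μ x (Set.Iio 0) = 0)
    (T : H →L[ℂ] H) (hT : T.IsPositive)
    (τ : ι → ℝ) (hτ : ∀ j, 0 ≤ τ j) (hTe : ∀ j, T (e j) = (τ j : ℂ) • e j)
    (hTtr : Summable τ)
    (henergy : (∑' j, ENNReal.ofReal (τ j) * ∫⁻ l, ENNReal.ofReal l ∂(μ (e j))) < ⊤)
    -- `A_n = Φ_n(A)` with `Φ_n(r) = r/(1 + r/n)`, via the functional calculus
    (An : ℕ → H →L[ℂ] H)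
    (hAn : ∀ (n : ℕ) (x : H), (⟪x, An n x⟫).re =
      (∫⁻ l, ENNReal.ofReal (l / (1 + l / (n : ℝ))) ∂(μ x)).toReal) :
    Tendsto (fun n => ∑' j, τ j * (⟪e j, An n (e j)⟫).re) atTop
        (𝓝 ((∑' j, ENNReal.ofReal (τ j) * ∫⁻ l, ENNReal.ofReal l ∂(μ (e j))).toReal)) ∧
      Tendsto (fun n =>
          ∑' j, ENNReal.ofReal (τ j) *
            ∫⁻ l, ENNReal.ofReal (l - l / (1 + l / (n : ℝ))) ∂(μ (e j))) atTop (𝓝 0) := by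
  have hS : (∑' j, ENNReal.ofReal (τ j) * ∫⁻ l, ENNReal.ofReal l ∂(μ (e j))) ≠ ⊤ :=
    henergy.ne
  have hpos : ∀ j, ∀ᵐ l ∂μ (e j), 0 ≤ l := by
    intro j
    rw [ae_iff]
    have h : {l : ℝ | ¬ 0 ≤ l} = Set.Iio 0 := by ext l; simp [not_le]
    rw [h]; exact hμsupp (e j)
  -- integral-level facts
  have hIle : ∀ (j) (n : ℕ), (∫⁻ l, ENNReal.ofReal (Phi n l) ∂μ (e j))
      ≤ ∫⁻ l, ENNReal.ofReal l ∂μ (e j) := fun j n =>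
    lintegral_mono_ae ((hpos j).mono fun l hl =>
      ENNReal.ofReal_le_ofReal (phi_le_self hl n))
  have hImono : ∀ j, Monotone fun n : ℕ =>
      ∫⁻ l, ENNReal.ofReal (Phi (n+1) l) ∂μ (e j) := fun j a b hab =>
    lintegral_mono_ae ((hpos j).mono fun l hl =>
      ENNReal.ofReal_le_ofReal (phi_mono hl hab))
  have hItendsto : ∀ j, Tendsto (fun n : ℕ => ∫⁻ l, ENNReal.ofReal (Phi (n+1) l) ∂μ (e j))
      atTop (𝓝 (∫⁻ l, ENNReal.ofReal l ∂μ (e j))) := fun j =>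
    lintegral_tendsto_of_tendsto_of_monotone (fun n => (phi_meas (n+1)).aemeasurable)
      ((hpos j).mono fun l hl a b hab => ENNReal.ofReal_le_ofReal (phi_mono hl hab))
      ((hpos j).mono fun l _ =>
        (ENNReal.continuous_ofReal.tendsto l).comp (phi_tendsto l))
  -- term-level facts
  have hgmono : ∀ j, Monotone fun n : ℕ =>
      ENNReal.ofReal (τ j) * ∫⁻ l, ENNReal.ofReal (Phi (n+1) l) ∂μ (e j) :=
    fun j a b hab => mul_le_mul_right (hImono j hab) _
  have hgle : ∀ (n : ℕ) (j), ENNReal.ofReal (τ j) * (∫⁻ l, ENNReal.ofReal (Phi n l) ∂μ (e j))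
      ≤ ENNReal.ofReal (τ j) * ∫⁻ l, ENNReal.ofReal l ∂μ (e j) :=
    fun n j => mul_le_mul_right (hIle j n) _
  have htSlt : ∀ j, ENNReal.ofReal (τ j) * (∫⁻ l, ENNReal.ofReal l ∂μ (e j)) < ⊤ :=
    fun j => ENNReal.lt_top_of_tsum_ne_top hS j
  have hgne : ∀ (n : ℕ) (j),
      ENNReal.ofReal (τ j) * (∫⁻ l, ENNReal.ofReal (Phi n l) ∂μ (e j)) ≠ ⊤ :=
    fun n j => ((hgle n j).trans_lt (htSlt j)).ne
  have hgt : ∀ j, Tendsto (fun n : ℕ =>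
      ENNReal.ofReal (τ j) * ∫⁻ l, ENNReal.ofReal (Phi (n+1) l) ∂μ (e j)) atTop
      (𝓝 (ENNReal.ofReal (τ j) * ∫⁻ l, ENNReal.ofReal l ∂μ (e j))) := fun j =>
    ENNReal.Tendsto.const_mul (hItendsto j) (Or.inr ENNReal.ofReal_ne_top)
  have hFmono : Monotone fun n : ℕ =>
      ∑' j, ENNReal.ofReal (τ j) * ∫⁻ l, ENNReal.ofReal (Phi (n+1) l) ∂μ (e j) :=
    fun a b hab => ENNReal.tsum_le_tsum fun j => hgmono j hab
  have hFle : ∀ n : ℕ,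
      (∑' j, ENNReal.ofReal (τ j) * ∫⁻ l, ENNReal.ofReal (Phi n l) ∂μ (e j))
      ≤ ∑' j, ENNReal.ofReal (τ j) * ∫⁻ l, ENNReal.ofReal l ∂μ (e j) :=
    fun n => ENNReal.tsum_le_tsum (hgle n)
  have hsup : (⨆ n : ℕ, ∑' j, ENNReal.ofReal (τ j) *
        ∫⁻ l, ENNReal.ofReal (Phi (n+1) l) ∂μ (e j))
      = ∑' j, ENNReal.ofReal (τ j) * ∫⁻ l, ENNReal.ofReal l ∂μ (e j) := calc
    (⨆ n : ℕ, ∑' j, ENNReal.ofReal (τ j) * ∫⁻ l, ENNReal.ofReal (Phi (n+1) l) ∂μ (e j))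
        = ⨆ n : ℕ, ⨆ s : Finset ι, ∑ j ∈ s,
            ENNReal.ofReal (τ j) * ∫⁻ l, ENNReal.ofReal (Phi (n+1) l) ∂μ (e j) := by
          simp_rw [ENNReal.tsum_eq_iSup_sum]
    _ = ⨆ s : Finset ι, ⨆ n : ℕ, ∑ j ∈ s,
            ENNReal.ofReal (τ j) * ∫⁻ l, ENNReal.ofReal (Phi (n+1) l) ∂μ (e j) := iSup_comm
    _ = ⨆ s : Finset ι, ∑ j ∈ s, ⨆ n : ℕ,
            ENNReal.ofReal (τ j) * ∫⁻ l, ENNReal.ofReal (Phi (n+1) l) ∂μ (e j) :=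
          iSup_congr fun s => (ENNReal.finsetSum_iSup_of_monotone fun j => hgmono j).symm
    _ = ∑' j, ⨆ n : ℕ,
            ENNReal.ofReal (τ j) * ∫⁻ l, ENNReal.ofReal (Phi (n+1) l) ∂μ (e j) :=
          ENNReal.tsum_eq_iSup_sum.symm
    _ = ∑' j, ENNReal.ofReal (τ j) * ∫⁻ l, ENNReal.ofReal l ∂μ (e j) :=
          tsum_congr fun j =>
            tendsto_nhds_unique (tendsto_atTop_iSup (hgmono j)) (hgt j)
  have hF : Tendsto (fun n : ℕ =>
      ∑' j, ENNReal.ofReal (τ j) * ∫⁻ l, ENNReal.ofReal (Phi n l) ∂μ (e j)) atTop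
      (𝓝 (∑' j, ENNReal.ofReal (τ j) * ∫⁻ l, ENNReal.ofReal l ∂μ (e j))) := by
    have h1 : Tendsto (fun n : ℕ =>
        ∑' j, ENNReal.ofReal (τ j) * ∫⁻ l, ENNReal.ofReal (Phi (n+1) l) ∂μ (e j)) atTop
        (𝓝 (∑' j, ENNReal.ofReal (τ j) * ∫⁻ l, ENNReal.ofReal l ∂μ (e j))) :=
      hsup ▸ tendsto_atTop_iSup hFmono
    exact (tendsto_add_atTop_iff_nat 1).mp h1
  constructor
  · -- first component
    have hfun : ∀ n : ℕ, (∑' j, τ j * (⟪e j, An n (e j)⟫).re)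
        = (∑' j, ENNReal.ofReal (τ j) * ∫⁻ l, ENNReal.ofReal (Phi n l) ∂μ (e j)).toReal := by
      intro n
      rw [ENNReal.tsum_toReal_eq (hgne n)]
      refine tsum_congr fun j => ?_
      rw [hAn n (e j), ENNReal.toReal_mul, ENNReal.toReal_ofReal (hτ j)]
      rfl
    have h1 := (ENNReal.tendsto_toReal hS).comp hF
    have h2 : (fun n : ℕ => ∑' j, τ j * (⟪e j, An n (e j)⟫).re)
        = fun n : ℕ => (∑' j, ENNReal.ofReal (τ j) *
            ∫⁻ l, ENNReal.ofReal (Phi n l) ∂μ (e j)).toReal := funext hfun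
    rw [h2]
    exact h1
  · -- second component
    have hR : ∀ n : ℕ,
        (∑' j, ENNReal.ofReal (τ j) * ∫⁻ l, ENNReal.ofReal (l - Phi n l) ∂μ (e j))
        = (∑' j, ENNReal.ofReal (τ j) * ∫⁻ l, ENNReal.ofReal l ∂μ (e j))
          - ∑' j, ENNReal.ofReal (τ j) * ∫⁻ l, ENNReal.ofReal (Phi n l) ∂μ (e j) := by
      intro n
      have hterm : ∀ j, ENNReal.ofReal (τ j) * ∫⁻ l, ENNReal.ofReal (l - Phi n l) ∂μ (e j)
          = ENNReal.ofReal (τ j) * (∫⁻ l, ENNReal.ofReal l ∂μ (e j))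
            - ENNReal.ofReal (τ j) * ∫⁻ l, ENNReal.ofReal (Phi n l) ∂μ (e j) := by
        intro j
        rcases eq_or_lt_of_le (hτ j) with h0 | hpos'
        · simp [← h0]
        · have hτne : ENNReal.ofReal (τ j) ≠ 0 := by
            simp [ENNReal.ofReal_eq_zero, not_le, hpos']
          have hIfin : (∫⁻ l, ENNReal.ofReal l ∂μ (e j)) ≠ ⊤ := by
            intro hI
            have h1 := htSlt j
            rw [hI, ENNReal.mul_top hτne] at h1
            exact lt_irrefl _ h1
          have hPhifin : (∫⁻ l, ENNReal.ofReal (Phi n l) ∂μ (e j)) ≠ ⊤ :=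
            ((hIle j n).trans_lt hIfin.lt_top).ne
          have hsub : (∫⁻ l, ENNReal.ofReal (l - Phi n l) ∂μ (e j))
              = (∫⁻ l, ENNReal.ofReal l ∂μ (e j))
                - ∫⁻ l, ENNReal.ofReal (Phi n l) ∂μ (e j) := by
            rw [← lintegral_sub (phi_meas n) hPhifin
              ((hpos j).mono fun l hl => ENNReal.ofReal_le_ofReal (phi_le_self hl n))]
            exact lintegral_congr_ae ((hpos j).mono fun l hl => by
              simp only [ENNReal.ofReal_sub _ (phi_nonneg hl n)])
          rw [hsub, ENNReal.mul_sub fun _ _ => ENNReal.ofReal_ne_top]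
      rw [tsum_congr hterm]
      have hFne : (∑' j, ENNReal.ofReal (τ j) *
          ∫⁻ l, ENNReal.ofReal (Phi n l) ∂μ (e j)) ≠ ⊤ :=
        ((hFle n).trans_lt hS.lt_top).ne
      refine ENNReal.eq_sub_of_add_eq hFne ?_
      rw [← ENNReal.tsum_add]
      exact tsum_congr fun j => tsub_add_cancel_of_le (hgle n j)
    have h2 : Tendsto (fun n : ℕ =>
        (∑' j, ENNReal.ofReal (τ j) * ∫⁻ l, ENNReal.ofReal l ∂μ (e j))
          - ∑' j, ENNReal.ofReal (τ j) * ∫⁻ l, ENNReal.ofReal (Phi n l) ∂μ (e j)) atTop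
        (𝓝 ((∑' j, ENNReal.ofReal (τ j) * ∫⁻ l, ENNReal.ofReal l ∂μ (e j))
          - ∑' j, ENNReal.ofReal (τ j) * ∫⁻ l, ENNReal.ofReal l ∂μ (e j))) :=
      ENNReal.Tendsto.sub tendsto_const_nhds hF (Or.inl hS)
    rw [tsub_self] at h2
    have hRnat : Tendsto (fun n : ℕ =>
        ∑' j, ENNReal.ofReal (τ j) * ∫⁻ l, ENNReal.ofReal (l - Phi n l) ∂μ (e j))
        atTop (𝓝 0) := by
      have h3 : (fun n : ℕ =>
          ∑' j, ENNReal.ofReal (τ j) * ∫⁻ l, ENNReal.ofReal (l - Phi n l) ∂μ (e j))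
          = fun n : ℕ =>
            (∑' j, ENNReal.ofReal (τ j) * ∫⁻ l, ENNReal.ofReal l ∂μ (e j))
            - ∑' j, ENNReal.ofReal (τ j) * ∫⁻ l, ENNReal.ofReal (Phi n l) ∂μ (e j) :=
        funext hR
      rw [h3]
      exact h2
    -- squeeze the real-parameter version between 0 and the ⌊·⌋₊-sampled ℕ version
    refine tendsto_of_tendsto_of_tendsto_of_le_of_le'
      tendsto_const_nhds
      (hRnat.comp tendsto_nat_floor_atTop) (Eventually.of_forall fun r => zero_le) ?_
    filter_upwards [eventually_ge_atTop (1 : ℝ)] with r hr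
    have hn1 : 1 ≤ ⌊r⌋₊ := (Nat.one_le_floor_iff r).mpr hr
    have hnpos : (0 : ℝ) < (⌊r⌋₊ : ℕ) := by exact_mod_cast Nat.lt_of_lt_of_le Nat.zero_lt_one hn1
    have hnr : ((⌊r⌋₊ : ℕ) : ℝ) ≤ r := Nat.floor_le (by linarith)
    refine ENNReal.tsum_le_tsum fun j => mul_le_mul_right (lintegral_mono_ae
      ((hpos j).mono fun l hl => ENNReal.ofReal_le_ofReal ?_)) _
    have := phi_real_mono hl hnpos hnr
    simp only [Phi]
    linarith
end
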